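/- Let G be a finite connected graph with terminals T ⊆ V(G), required grades R : T → {1,…,ℓ}, and installation costs with 0 = c_0(v) ≤ c_1(v) ≤ … ≤ c_ℓ(v) for all v. Let (G', y) be a feasible V-GSST solution such that G' is a grade-respecting tree rooted at some r ∈ V(G') with y(r) = ℓ. Then for every grade i ∈ {1,…,ℓ}, the set S_i = {v ∈ V(G') : y(v) ≥ i} contains every terminal v ∈ T with R(v) ≥ i, induces a connected subgraph of G', and satisfies Σ_{v ∈ S_i} c_i(v) ≤ Σ_{v ∈ V(G')} c_{y(v)}(v). -/

import Mathlib

/-- `(H, y)` is a feasible V-GSST solution: `H` is a subtree of `G` spanning the terminals `T`,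
the grades `y` are at most `ℓ`, vanish outside `H`, satisfy `R v ≤ y v` on terminals, and every
vertex on the unique path in `H` between two terminals `u, v` has grade at least
`min (R u) (R v)`. -/
def VgsstFeasible {V : Type*} {G : SimpleGraph V} (T : Set V) (R : V → ℕ) (ℓ : ℕ)
    (H : G.Subgraph) (y : V → ℕ) : Prop :=
  H.Connected ∧ H.coe.IsAcyclic ∧ T ⊆ H.verts ∧
  (∀ v : V, y v ≤ ℓ) ∧ (∀ v : V, v ∉ H.verts → y v = 0) ∧
  (∀ v ∈ T, R v ≤ y v) ∧
  (∀ u ∈ T, ∀ v ∈ T, ∀ (hu : u ∈ H.verts) (hv : v ∈ H.verts),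
    ∀ p : H.coe.Walk ⟨u, hu⟩ ⟨v, hv⟩,
      p.IsPath → ∀ w ∈ p.support, min (R u) (R v) ≤ y w.1)

/-- The cost of a solution: the sum of the installation costs `c (y v) v` over the vertices of
`H`. -/
noncomputable def vgsstCost {V : Type*} [Fintype V] {G : SimpleGraph V}
    (c : ℕ → V → ℝ) (H : G.Subgraph) (y : V → ℕ) : ℝ :=
  ∑ v : V, H.verts.indicator (fun v => c (y v) v) v

/-- `H` with labels `y` is a grade-respecting tree rooted at `r`: the labels along the unique
path in `H` from `r` to any vertex are non-increasing. -/
def IsGRTRootedAt {V : Type*} {G : SimpleGraph V} (H : G.Subgraph) (y : V → ℕ) (r : V) : Prop :=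
  ∃ hr : r ∈ H.verts, ∀ (v : H.verts) (p : H.coe.Walk ⟨r, hr⟩ v),
    p.IsPath → (p.support.map fun w => y w.1).Chain' (fun a b => b ≤ a)


lemma chain'_ge_last {l : List ℕ} (h : l.Chain' (fun a b => b ≤ a)) {a : ℕ} (ha : a ∈ l)
    (hne : l ≠ []) : l.getLast hne ≤ a := by
  induction l with
  | nil => simp at ha
  | cons x xs ih =>
    rcases eq_or_ne xs [] with rfl | hxs
    · simp at ha; simp [ha]
    · rw [List.getLast_cons hxs]
      rcases List.mem_cons.mp ha with rfl | ha
      · have hp := (List.isChain_iff_pairwise.mp h)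
        exact (List.pairwise_cons.mp hp).1 _ (List.getLast_mem hxs)
      · exact ih (List.isChain_cons.mp h).2 ha hxs

lemma walk_lift {V : Type*} (G : SimpleGraph V) (S : Set V) {u v : V} (p : G.Walk u v)
    (hs : ∀ w ∈ p.support, w ∈ S) (hu : u ∈ S) (hv : v ∈ S) :
    (G.induce S).Reachable ⟨u, hu⟩ ⟨v, hv⟩ := by
  induction p with
  | nil => exact SimpleGraph.Reachable.refl _
  | @cons a b c h q ih =>
    have hb : b ∈ S := hs b (by simp)
    have hadj : (G.induce S).Adj ⟨a, hu⟩ ⟨b, hb⟩ := h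
    exact hadj.reachable.trans (ih (fun w hw => hs w (by simp [hw])) hb hv)
/-- **Key step in the analysis of the top-down heuristic.** If `(H, y)` is a feasible V-GSST
solution which is a grade-respecting tree rooted at a vertex `r` with `y r = ℓ`, then for every
grade `1 ≤ i ≤ ℓ` the level set `S_i = {v ∈ V(H) : y v ≥ i}` contains every terminal of required
grade at least `i`, induces a connected subgraph of `H`, and its total `c_i`-cost is at most the
cost of `(H, y)`. -/
theorem topdown_level_set_bound {V : Type*} [Fintype V]
    (G : SimpleGraph V) (hG : G.Connected)
    (T : Set V) (ℓ : ℕ) (R : V → ℕ) (hR : ∀ v ∈ T, 1 ≤ R v ∧ R v ≤ ℓ)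
    (c : ℕ → V → ℝ) (hc0 : ∀ v, c 0 v = 0)
    (hcmono : ∀ v : V, ∀ i j : ℕ, i ≤ j → j ≤ ℓ → c i v ≤ c j v)
    (H : G.Subgraph) (y : V → ℕ) (hfeas : VgsstFeasible T R ℓ H y)
    (r : V) (hr : r ∈ H.verts) (hgrt : IsGRTRootedAt H y r) (hyr : y r = ℓ) :
    ∀ i : ℕ, 1 ≤ i → i ≤ ℓ →
      (∀ v ∈ T, i ≤ R v → v ∈ H.verts ∧ i ≤ y v) ∧
      (H.coe.induce {v : H.verts | i ≤ y v.1}).Connected ∧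
      (∑ v : V, ({v : V | v ∈ H.verts ∧ i ≤ y v}).indicator (fun v => c i v) v
        ≤ vgsstCost c H y) := by
  classical
  intro i hi1 hil
  obtain ⟨hHconn, hacyc, hTsub, hyle, hy0, hRy, hpath⟩ := hfeas
  obtain ⟨hr', hchain⟩ := hgrt
  have hrS : i ≤ y (⟨r, hr'⟩ : H.verts).1 := by simpa [hyr] using hil
  have key : ∀ u : H.verts, ∀ hu : i ≤ y u.1,
      (H.coe.induce {v : H.verts | i ≤ y v.1}).Reachable ⟨⟨r, hr'⟩, hrS⟩ ⟨u, hu⟩ := by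
    intro u hu
    obtain ⟨p⟩ := hHconn ⟨r, hr'⟩ u
    have hch := hchain u p.toPath.1 p.toPath.2
    have hsupp : ∀ w ∈ (p.toPath.1).support, w ∈ {v : H.verts | i ≤ y v.1} := by
      intro w hw
      have hne : ((p.toPath.1).support.map fun w => y w.1) ≠ [] :=
        fun h => SimpleGraph.Walk.support_ne_nil _ (List.map_eq_nil_iff.mp h)
      have hlast : ((p.toPath.1).support.map fun w => y w.1).getLast hne = y u.1 := by
        rw [List.getLast_map hne, SimpleGraph.Walk.getLast_support]
      have hmem : y w.1 ∈ ((p.toPath.1).support.map fun w => y w.1) :=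
        List.mem_map_of_mem hw
      have := chain'_ge_last hch hmem hne
      rw [hlast] at this
      exact le_trans hu this
    exact walk_lift H.coe {v : H.verts | i ≤ y v.1} p.toPath.1 hsupp hrS hu
  refine ⟨fun v hv hiv => ⟨hTsub hv, le_trans hiv (hRy v hv)⟩, ?_, ?_⟩
  · haveI : Nonempty {v : H.verts | i ≤ y v.1} := ⟨⟨⟨r, hr'⟩, hrS⟩⟩
    exact ⟨fun a b => ((key a.1 a.2).symm.trans (key b.1 b.2))⟩
  · rw [vgsstCost]
    apply Finset.sum_le_sum
    intro v _
    by_cases hv : v ∈ H.verts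
    · by_cases hvi : i ≤ y v
      · rw [Set.indicator_of_mem (show v ∈ {v : V | v ∈ H.verts ∧ i ≤ y v} from ⟨hv, hvi⟩),
          Set.indicator_of_mem hv]
        exact hcmono v i (y v) hvi (hyle v)
      · rw [Set.indicator_of_notMem (by intro h; exact hvi h.2),
          Set.indicator_of_mem hv]
        calc (0 : ℝ) = c 0 v := (hc0 v).symm
          _ ≤ c (y v) v := hcmono v 0 (y v) (Nat.zero_le _) (hyle v)
    · rw [Set.indicator_of_notMem (by intro h; exact hv h.1),
        Set.indicator_of_notMem hv]
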